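/- For unit vectors representing points x, y, v, w in projective spaces, the join satisfies |x # y, v # w| ≥ min(|x,v|, |y,w|), where x # y = [a ⊕ b] ∈ P^{2t+1}(ℂ) for unit representatives a of x and b of y, and |·,·| is the Fubini–Study distance. -/

import Mathlib

/-- Fubini–Study (sine) distance between two nonzero vectors representing points of
projective space. -/
noncomputable def fsDist {ι : Type*} [Fintype ι] (v w : EuclideanSpace ℂ ι) : ℝ :=
  Real.sqrt (1 - ‖(@inner ℂ _ _ v w)‖ ^ 2 / (‖v‖ ^ 2 * ‖w‖ ^ 2))

/-- Join of two points given by unit representatives: concatenation `a ⊕ b`. -/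
noncomputable def joinVec {ι : Type*} [Fintype ι] (a b : EuclideanSpace ℂ ι) :
    EuclideanSpace ℂ (ι ⊕ ι) :=
  (WithLp.equiv 2 ((ι ⊕ ι) → ℂ)).symm
    (Sum.elim ((WithLp.equiv 2 (ι → ℂ)) a) ((WithLp.equiv 2 (ι → ℂ)) b))

lemma inner_join {ι : Type*} [Fintype ι] (a b u w : EuclideanSpace ℂ ι) :
    (inner ℂ (joinVec a b) (joinVec u w) : ℂ) = inner ℂ a u + inner ℂ b w := by
  simp [joinVec, PiLp.inner_apply, Fintype.sum_sum_type]

lemma norm_sq_join {ι : Type*} [Fintype ι] (a b : EuclideanSpace ℂ ι) :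
    ‖joinVec a b‖ ^ 2 = ‖a‖ ^ 2 + ‖b‖ ^ 2 := by
  have h := inner_join a b a b
  simp only [inner_self_eq_norm_sq_to_K] at h
  exact_mod_cast h

theorem stmt17 (t : ℕ) (a b u w : EuclideanSpace ℂ (Fin (t + 1)))
    (ha : ‖a‖ = 1) (hb : ‖b‖ = 1) (hu : ‖u‖ = 1) (hw : ‖w‖ = 1) :
    min (fsDist a u) (fsDist b w) ≤ fsDist (joinVec a b) (joinVec u w) := by
  have hab : ‖joinVec a b‖ ^ 2 = 2 := by rw [norm_sq_join, ha, hb]; norm_num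
  have huw : ‖joinVec u w‖ ^ 2 = 2 := by rw [norm_sq_join, hu, hw]; norm_num
  unfold fsDist
  rw [inner_join, hab, huw, ha, hb, hu, hw]
  set α := ‖(inner ℂ a u : ℂ)‖ with hαdef
  set β := ‖(inner ℂ b w : ℂ)‖ with hβdef
  set S := ‖(inner ℂ a u + inner ℂ b w : ℂ)‖ with hSdef
  have hS : S ≤ α + β := norm_add_le _ _
  have hS0 : 0 ≤ S := norm_nonneg _
  have hα0 : 0 ≤ α := norm_nonneg _
  have hβ0 : 0 ≤ β := norm_nonneg _
  rcases le_total β α with h | h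
  · refine (min_le_left _ _).trans (Real.sqrt_le_sqrt ?_)
    have : S ^ 2 ≤ (2 * α) ^ 2 := by nlinarith
    nlinarith
  · refine (min_le_right _ _).trans (Real.sqrt_le_sqrt ?_)
    have : S ^ 2 ≤ (2 * β) ^ 2 := by nlinarith
    nlinarith
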